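/- Let R be an integral domain and A a free R-algebra of rank 2 (as an R-module). Then there exists x ∈ A such that {1, x} is an R-basis of A. -/

import Mathlib

/-- Every free algebra of rank 2 over a domain has a basis of the form {1, x}. -/
theorem free_rank_two_has_basis_containing_one
    (R A : Type*) [CommRing R] [IsDomain R] [Ring A] [Algebra R A]
    (hinj : Function.Injective (algebraMap R A))
    (hfree : Nonempty (Module.Basis (Fin 2) R A)) :
    ∃ (x : A) (b : Module.Basis (Fin 2) R A), b 0 = 1 ∧ b 1 = x := by
  obtain ⟨e⟩ := hfree
  set a := e.repr 1 0 with ha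
  set b := e.repr 1 1 with hb
  have h1 : (1 : A) = a • e 0 + b • e 1 := by
    have := e.sum_repr 1
    rw [Fin.sum_univ_two] at this
    exact this.symm
  set p := e.repr (e 0 * e 0) 0 with hp
  set r := e.repr (e 1 * e 0) 0 with hr
  have key : a * p + b * r = 1 := by
    have he0 : (e 0 : A) = a • (e 0 * e 0) + b • (e 1 * e 0) := by
      conv_lhs => rw [← one_mul (e 0), h1]
      rw [add_mul, smul_mul_assoc, smul_mul_assoc]
    have h := congrArg (fun x => e.repr x 0) he0
    simpa [map_add, map_smul, Finsupp.single_eq_same, smul_eq_mul, ← hp, ← hr]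
      using h.symm
  set M : Matrix (Fin 2) (Fin 2) R := !![a, -r; b, p] with hM
  set N : Matrix (Fin 2) (Fin 2) R := !![p, r; -b, a] with hN
  have hMN : M * N = 1 := by
    rw [hM, hN]
    ext i j
    fin_cases i <;> fin_cases j <;>
      simp [Matrix.mul_apply, Fin.sum_univ_two, Matrix.one_apply] <;> ring_nf <;>
      linear_combination key
  have hNM : N * M = 1 := by
    rw [hM, hN]
    ext i j
    fin_cases i <;> fin_cases j <;>
      simp [Matrix.mul_apply, Fin.sum_univ_two, Matrix.one_apply] <;> ring_nf <;>
      linear_combination key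
  let f : A ≃ₗ[R] A := Matrix.toLinOfInv e e hMN hNM
  refine ⟨-r • e 0 + p • e 1, e.map f, ?_, ?_⟩
  · have : f (e 0) = a • e 0 + b • e 1 := by
      show Matrix.toLin e e M (e 0) = _
      rw [Matrix.toLin_self, Fin.sum_univ_two, hM]
      simp
    simp [Module.Basis.map_apply, this, ← h1]
  · have : f (e 1) = -r • e 0 + p • e 1 := by
      show Matrix.toLin e e M (e 1) = _
      rw [Matrix.toLin_self, Fin.sum_univ_two, hM]
      simp
    simp [Module.Basis.map_apply, this]
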